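/- Let T be a left-continuous t-norm, I its residual implicator, μ a monotone measure on a finite nonempty set X, and R a T-equivalence relation on X. For every fuzzy set A on X, the Sugeno lower approximation L(y) = ⨍ I(R(x,y), A(x)) dμ(x) is a fixed point of the classical lower approximation: min_{x∈X} I(R(x,y), L(x)) = L(y) for every y ∈ X. -/
import Mathlib


structure IsTNorm (T : ℝ → ℝ → ℝ) : Prop where
  maps_to : ∀ x ∈ Set.Icc (0:ℝ) 1, ∀ y ∈ Set.Icc (0:ℝ) 1, T x y ∈ Set.Icc (0:ℝ) 1
  comm : ∀ x ∈ Set.Icc (0:ℝ) 1, ∀ y ∈ Set.Icc (0:ℝ) 1, T x y = T y x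
  assoc : ∀ x ∈ Set.Icc (0:ℝ) 1, ∀ y ∈ Set.Icc (0:ℝ) 1, ∀ z ∈ Set.Icc (0:ℝ) 1,
      T (T x y) z = T x (T y z)
  mono : ∀ x₁ ∈ Set.Icc (0:ℝ) 1, ∀ x₂ ∈ Set.Icc (0:ℝ) 1, ∀ y₁ ∈ Set.Icc (0:ℝ) 1,
      ∀ y₂ ∈ Set.Icc (0:ℝ) 1, x₁ ≤ x₂ → y₁ ≤ y₂ → T x₁ y₁ ≤ T x₂ y₂
  one_left : ∀ x ∈ Set.Icc (0:ℝ) 1, T 1 x = x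

/-- `T` is left-continuous: it commutes with suprema of nonempty subsets of `[0,1]`
in each (equivalently, by commutativity, the second) argument. -/
def LeftContinuousTNorm (T : ℝ → ℝ → ℝ) : Prop :=
  ∀ x ∈ Set.Icc (0:ℝ) 1, ∀ S : Set ℝ, S.Nonempty → S ⊆ Set.Icc (0:ℝ) 1 →
    T x (sSup S) = sSup (T x '' S)

/-- The residual implicator of `T`: `I(x,y) = sup {λ ∈ [0,1] | T(x,λ) ≤ y}`. -/
noncomputable def resid (T : ℝ → ℝ → ℝ) (x y : ℝ) : ℝ :=
  sSup {l | l ∈ Set.Icc (0:ℝ) 1 ∧ T x l ≤ y}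

/-- `R` is a `T`-equivalence relation: a `[0,1]`-valued reflexive, symmetric and
`T`-transitive fuzzy relation. -/
structure IsTEquiv {X : Type*} (T : ℝ → ℝ → ℝ) (R : X → X → ℝ) : Prop where
  mem : ∀ x y, R x y ∈ Set.Icc (0:ℝ) 1
  refl : ∀ x, R x x = 1
  symm : ∀ x y, R x y = R y x
  trans : ∀ x y z, T (R x y) (R y z) ≤ R x z

/-- A monotone measure on a finite set `X`. -/
structure IsMonotoneMeasure {X : Type*} (μ : Set X → ℝ) : Prop where
  empty : μ ∅ = 0
  univ : μ Set.univ = 1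
  mono : ∀ E F : Set X, E ⊆ F → μ E ≤ μ F

/-- The Sugeno integral of `f : X → ℝ` w.r.t. `μ` on the finite nonempty set `X`:
`max_i min(μ(A*_i), f(x*_i))` where `x*` enumerates `X` with
`f(x*_1) ≤ … ≤ f(x*_n)` and `A*_i = {x*_i, …, x*_n}`. -/
noncomputable def sugeno {X : Type*} [Fintype X] [Nonempty X] (μ : Set X → ℝ) (f : X → ℝ) : ℝ :=
  let e : Fin (Fintype.card X) ≃ X := (Fintype.equivFin X).symm
  let σ : Equiv.Perm (Fin (Fintype.card X)) := Tuple.sort (f ∘ e)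
  haveI : Nonempty (Fin (Fintype.card X)) := Fin.pos_iff_nonempty.mp Fintype.card_pos
  Finset.univ.sup' Finset.univ_nonempty
    (fun i => min (μ {x | ∃ j, i ≤ j ∧ e (σ j) = x}) (f (e (σ i))))


section Helpers

variable {T : ℝ → ℝ → ℝ}

lemma mem01_one : (1:ℝ) ∈ Set.Icc (0:ℝ) 1 := ⟨zero_le_one, le_rfl⟩
lemma mem01_zero : (0:ℝ) ∈ Set.Icc (0:ℝ) 1 := ⟨le_rfl, zero_le_one⟩

lemma tnorm_zero_right (hT : IsTNorm T) {x : ℝ} (hx : x ∈ Set.Icc (0:ℝ) 1) : T x 0 = 0 := by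
  have h1 := hT.mono x hx 1 mem01_one 0 mem01_zero 0 mem01_zero hx.2 le_rfl
  rw [hT.one_left 0 mem01_zero] at h1
  have h2 := (hT.maps_to x hx 0 mem01_zero).1
  linarith

lemma resid_set_nonempty (hT : IsTNorm T) {x y : ℝ} (hx : x ∈ Set.Icc (0:ℝ) 1)
    (hy : y ∈ Set.Icc (0:ℝ) 1) :
    (0:ℝ) ∈ {l | l ∈ Set.Icc (0:ℝ) 1 ∧ T x l ≤ y} :=
  ⟨mem01_zero, by rw [tnorm_zero_right hT hx]; exact hy.1⟩

lemma resid_set_bdd {x y : ℝ} :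
    BddAbove {l | l ∈ Set.Icc (0:ℝ) 1 ∧ T x l ≤ y} :=
  ⟨1, fun l hl => hl.1.2⟩

lemma resid_mem (hT : IsTNorm T) {x y : ℝ} (hx : x ∈ Set.Icc (0:ℝ) 1)
    (hy : y ∈ Set.Icc (0:ℝ) 1) : resid T x y ∈ Set.Icc (0:ℝ) 1 := by
  constructor
  · exact le_csSup resid_set_bdd (resid_set_nonempty hT hx hy)
  · exact csSup_le ⟨0, resid_set_nonempty hT hx hy⟩ (fun l hl => hl.1.2)

lemma le_resid (hT : IsTNorm T) {x y c : ℝ} (hc : c ∈ Set.Icc (0:ℝ) 1)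
    (h : T x c ≤ y) : c ≤ resid T x y :=
  le_csSup resid_set_bdd ⟨hc, h⟩

lemma T_resid_le (hT : IsTNorm T) (hTlc : LeftContinuousTNorm T) {x y : ℝ}
    (hx : x ∈ Set.Icc (0:ℝ) 1) (hy : y ∈ Set.Icc (0:ℝ) 1) :
    T x (resid T x y) ≤ y := by
  rw [resid, hTlc x hx _ ⟨0, resid_set_nonempty hT hx hy⟩ (fun l hl => hl.1)]
  apply csSup_le (Set.Nonempty.image _ ⟨0, resid_set_nonempty hT hx hy⟩)
  rintro b ⟨l, hl, rfl⟩
  exact hl.2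

lemma resid_one (hT : IsTNorm T) {y : ℝ} (hy : y ∈ Set.Icc (0:ℝ) 1) :
    resid T 1 y = y := by
  have hset : {l | l ∈ Set.Icc (0:ℝ) 1 ∧ T 1 l ≤ y} = Set.Icc 0 y := by
    ext l
    constructor
    · rintro ⟨hl, hT1⟩
      rw [hT.one_left l hl] at hT1
      exact ⟨hl.1, hT1⟩
    · rintro ⟨h0, hl⟩
      have hl1 : l ∈ Set.Icc (0:ℝ) 1 := ⟨h0, hl.trans hy.2⟩
      exact ⟨hl1, by rw [hT.one_left l hl1]; exact hl⟩
  rw [resid, hset, csSup_Icc hy.1]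

lemma measure_nonneg {X : Type*} {μ : Set X → ℝ} (hμ : IsMonotoneMeasure μ)
    (E : Set X) : 0 ≤ μ E := hμ.empty ▸ hμ.mono ∅ E (Set.empty_subset E)

lemma measure_le_one {X : Type*} {μ : Set X → ℝ} (hμ : IsMonotoneMeasure μ)
    (E : Set X) : μ E ≤ 1 := hμ.univ ▸ hμ.mono E Set.univ (Set.subset_univ E)

lemma sugeno_spec {X : Type*} [Fintype X] [Nonempty X] (μ : Set X → ℝ) (f : X → ℝ) :
    ∃ (E : Set X) (x0 : X), sugeno μ f = min (μ E) (f x0) ∧ ∀ x ∈ E, f x0 ≤ f x := by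
  classical
  set e : Fin (Fintype.card X) ≃ X := (Fintype.equivFin X).symm with he
  set σ : Equiv.Perm (Fin (Fintype.card X)) := Tuple.sort (f ∘ e) with hσ
  haveI : Nonempty (Fin (Fintype.card X)) := Fin.pos_iff_nonempty.mp Fintype.card_pos
  have hdef : sugeno μ f = Finset.univ.sup' Finset.univ_nonempty
      (fun i => min (μ {x | ∃ j, i ≤ j ∧ e (σ j) = x}) (f (e (σ i)))) := rfl
  obtain ⟨i, -, hi⟩ := Finset.exists_mem_eq_sup' (Finset.univ_nonempty)
      (fun i => min (μ {x | ∃ j, i ≤ j ∧ e (σ j) = x}) (f (e (σ i))))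
  refine ⟨{x | ∃ j, i ≤ j ∧ e (σ j) = x}, e (σ i), by rw [hdef, hi], ?_⟩
  rintro x ⟨j, hij, rfl⟩
  exact Tuple.monotone_sort (f ∘ e) hij

lemma min_le_sugeno {X : Type*} [Fintype X] [Nonempty X] {μ : Set X → ℝ}
    (hμ : IsMonotoneMeasure μ) (f : X → ℝ) (hf : ∀ x, 0 ≤ f x)
    {E : Set X} {t : ℝ} (ht : 0 ≤ t) (h : ∀ x ∈ E, t ≤ f x) :
    min (μ E) t ≤ sugeno μ f := by
  classical
  set e : Fin (Fintype.card X) ≃ X := (Fintype.equivFin X).symm with he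
  set σ : Equiv.Perm (Fin (Fintype.card X)) := Tuple.sort (f ∘ e) with hσ
  haveI : Nonempty (Fin (Fintype.card X)) := Fin.pos_iff_nonempty.mp Fintype.card_pos
  have hdef : sugeno μ f = Finset.univ.sup' Finset.univ_nonempty
      (fun i => min (μ {x | ∃ j, i ≤ j ∧ e (σ j) = x}) (f (e (σ i)))) := rfl
  rcases E.eq_empty_or_nonempty with hE | ⟨x0, hx0⟩
  · have h0 : (0:ℝ) ≤ sugeno μ f := by
      rw [hdef]
      obtain ⟨i⟩ := (inferInstance : Nonempty (Fin (Fintype.card X)))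
      calc (0:ℝ) ≤ min (μ {x | ∃ j, i ≤ j ∧ e (σ j) = x}) (f (e (σ i))) :=
            le_min (measure_nonneg hμ _) (hf _)
        _ ≤ _ := Finset.le_sup' (fun i => min (μ {x | ∃ j, i ≤ j ∧ e (σ j) = x}) (f (e (σ i)))) (Finset.mem_univ i)
    rw [hE, hμ.empty]
    exact le_trans (min_le_left _ _) h0
  · set S : Finset (Fin (Fintype.card X)) := Finset.univ.filter (fun j => e (σ j) ∈ E)
      with hS
    have hSne : S.Nonempty := by
      refine ⟨σ.symm (e.symm x0), ?_⟩
      simp [hS, hx0]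
    set i := S.min' hSne with hi
    have hiE : e (σ i) ∈ E := by
      have := S.min'_mem hSne
      simp [hS] at this
      exact this
    have hsub : E ⊆ {x | ∃ j, i ≤ j ∧ e (σ j) = x} := by
      intro x hx
      refine ⟨σ.symm (e.symm x), ?_, by simp⟩
      apply S.min'_le
      simp [hS, hx]
    rw [hdef]
    refine le_trans ?_ (Finset.le_sup' (fun i => min (μ {x | ∃ j, i ≤ j ∧ e (σ j) = x}) (f (e (σ i)))) (Finset.mem_univ i))
    exact min_le_min (hμ.mono _ _ hsub) (h _ hiE)

lemma sugeno_mem {X : Type*} [Fintype X] [Nonempty X] {μ : Set X → ℝ}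
    (hμ : IsMonotoneMeasure μ) (f : X → ℝ) (hf : ∀ x, f x ∈ Set.Icc (0:ℝ) 1) :
    sugeno μ f ∈ Set.Icc (0:ℝ) 1 := by
  obtain ⟨E, x0, hEv, -⟩ := sugeno_spec μ f
  rw [hEv]
  constructor
  · exact le_min (measure_nonneg hμ _) (hf x0).1
  · exact le_trans (min_le_right _ _) (hf x0).2

end Helpers

/-- the Sugeno lower approximation is a fixed point of the classical
lower approximation. -/
theorem stmt10 {X : Type*} [Fintype X] [Nonempty X]
    (T : ℝ → ℝ → ℝ) (hT : IsTNorm T) (hTlc : LeftContinuousTNorm T)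
    (μ : Set X → ℝ) (hμ : IsMonotoneMeasure μ)
    (R : X → X → ℝ) (hR : IsTEquiv T R)
    (A : X → ℝ) (hA : ∀ x, A x ∈ Set.Icc (0:ℝ) 1) :
    ∀ y : X,
      Finset.univ.inf' Finset.univ_nonempty
          (fun x => resid T (R x y) (sugeno μ (fun x' => resid T (R x' x) (A x'))))
        = sugeno μ (fun x' => resid T (R x' y) (A x')) := by
  intro y
  have hfmem : ∀ (z x' : X), resid T (R x' z) (A x') ∈ Set.Icc (0:ℝ) 1 :=
    fun z x' => resid_mem hT (hR.mem x' z) (hA x')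
  set L : X → ℝ := fun z => sugeno μ (fun x' => resid T (R x' z) (A x')) with hL
  have hLmem : ∀ z, L z ∈ Set.Icc (0:ℝ) 1 := fun z => sugeno_mem hμ _ (hfmem z)
  have key : ∀ x x', T (R x y) (resid T (R x' y) (A x')) ≤ resid T (R x' x) (A x') := by
    intro x x'
    apply le_resid hT (hT.maps_to _ (hR.mem x y) _ (hfmem y x'))
    rw [← hT.assoc _ (hR.mem x' x) _ (hR.mem x y) _ (hfmem y x')]
    calc T (T (R x' x) (R x y)) (resid T (R x' y) (A x'))
        ≤ T (R x' y) (resid T (R x' y) (A x')) :=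
          hT.mono _ (hT.maps_to _ (hR.mem x' x) _ (hR.mem x y)) _ (hR.mem x' y)
            _ (hfmem y x') _ (hfmem y x') (hR.trans x' x y) le_rfl
      _ ≤ A x' := T_resid_le hT hTlc (hR.mem x' y) (hA x')
  have main : ∀ x, T (R x y) (L y) ≤ L x := by
    intro x
    obtain ⟨E, x0, hEv, hvle⟩ := sugeno_spec μ (fun x' => resid T (R x' y) (A x'))
    have hax : R x y ∈ Set.Icc (0:ℝ) 1 := hR.mem x y
    have hv : resid T (R x0 y) (A x0) ∈ Set.Icc (0:ℝ) 1 := hfmem y x0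
    have hmmem : min (μ E) (resid T (R x0 y) (A x0)) ∈ Set.Icc (0:ℝ) 1 :=
      ⟨le_min (measure_nonneg hμ _) hv.1, le_trans (min_le_right _ _) hv.2⟩
    have step1 : T (R x y) (L y) ≤ min (μ E) (T (R x y) (resid T (R x0 y) (A x0))) := by
      have hLy : L y = min (μ E) (resid T (R x0 y) (A x0)) := hEv
      rw [hLy]
      refine le_min ?_ ?_
      · calc T (R x y) (min (μ E) (resid T (R x0 y) (A x0)))
            ≤ T 1 (min (μ E) (resid T (R x0 y) (A x0))) :=
              hT.mono _ hax 1 mem01_one _ hmmem _ hmmem hax.2 le_rfl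
          _ = min (μ E) (resid T (R x0 y) (A x0)) := hT.one_left _ hmmem
          _ ≤ μ E := min_le_left _ _
      · exact hT.mono _ hax _ hax _ hmmem _ hv le_rfl (min_le_right _ _)
    refine le_trans step1 (min_le_sugeno hμ _ (fun x' => (hfmem x x').1)
      (hT.maps_to _ hax _ hv).1 ?_)
    intro x' hx'
    calc T (R x y) (resid T (R x0 y) (A x0))
        ≤ T (R x y) (resid T (R x' y) (A x')) :=
          hT.mono _ hax _ hax _ hv _ (hfmem y x') le_rfl (hvle x' hx')
      _ ≤ resid T (R x' x) (A x') := key x x'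
  apply le_antisymm
  · refine le_trans (Finset.inf'_le _ (Finset.mem_univ y)) ?_
    rw [hR.refl y, resid_one hT (hLmem y)]
  · apply Finset.le_inf'
    intro x _
    exact le_resid hT (hLmem y) (main x)
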